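/- Let N ≥ 2, α ∈ ℂ with |α| ≤ r < 1, ψ, φ ∈ ℝ, and θ_j = 2πj/N + φ for j = 0,…,N−1. Then |(1/N) ∑_{j=0}^{N-1} M_{α,ψ}(e^{iθ_j}) − α| ≤ (2 + r) r^{N-1} / (1 − r). Consequently, for fixed r < 1 and any ε > 0, for all sufficiently large N the order parameter z(α,ψ,θ) is within ε of α uniformly on the disk of radius r. -/

import Mathlib

open Complex Real

/-- Möbius transformation preserving the unit circle. -/
noncomputable def mobius (α : ℂ) (ψ : ℝ) (w : ℂ) : ℂ :=
  (α + Complex.exp (Complex.I * ψ) * w) / (1 + (starRingEnd ℂ) α * Complex.exp (Complex.I * ψ) * w)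

/-- Order parameter of `N` phases transported by the Möbius map. -/
noncomputable def orderParam (N : ℕ) (α : ℂ) (ψ : ℝ) (θ : ℕ → ℝ) : ℂ :=
  ((1 : ℂ) / N) * ∑ j ∈ Finset.range N, mobius α ψ (Complex.exp (Complex.I * (θ j : ℂ)))

lemma rootsum (N m : ℕ) (hm0 : 0 < m) (hmN : m < N) :
    ∑ j ∈ Finset.range N, (Complex.exp (2 * Real.pi * Complex.I * m / N)) ^ j = 0 := by
  set z : ℂ := Complex.exp (2 * Real.pi * Complex.I * m / N) with hz
  have hN : (N : ℂ) ≠ 0 := Nat.cast_ne_zero.mpr (by omega)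
  have hpi : (Real.pi : ℂ) ≠ 0 := Complex.ofReal_ne_zero.mpr Real.pi_ne_zero
  have hz1 : z ≠ 1 := by
    rw [hz]
    intro h
    rw [Complex.exp_eq_one_iff] at h
    obtain ⟨n, hn⟩ := h
    have h2pi : (2 * (Real.pi:ℂ) * Complex.I) ≠ 0 := by
      simp [hpi, Complex.I_ne_zero]
    have hmn : (m : ℂ) = n * N := by
      field_simp at hn
      linear_combination hn
    have hmi : (m : ℤ) = n * N := by exact_mod_cast hmn
    have hnn : (0:ℤ) < n * N := by rw [← hmi]; exact_mod_cast hm0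
    have hN0 : (0:ℤ) < N := by exact_mod_cast Nat.pos_of_ne_zero (by omega)
    have h1n : (1:ℤ) ≤ n := by nlinarith
    have hmN' : (m:ℤ) < N := by exact_mod_cast hmN
    nlinarith
  have hzN : z ^ N = 1 := by
    rw [hz, ← Complex.exp_nat_mul]
    have h2 : (N : ℂ) * (2 * Real.pi * Complex.I * m / N) = m * (2 * Real.pi * Complex.I) := by
      field_simp
    rw [h2, Complex.exp_nat_mul, Complex.exp_two_pi_mul_I, one_pow]
  rw [geom_sum_eq hz1, hzN, sub_self, zero_div]

lemma vsum (N m : ℕ) (hm0 : 0 < m) (hmN : m < N) (ψ φ : ℝ) :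
    ∑ j ∈ Finset.range N,
      (Complex.exp (Complex.I * ψ) *
        Complex.exp (Complex.I * ((2 * Real.pi * j / N + φ : ℝ) : ℂ))) ^ m = 0 := by
  have hN : (N : ℂ) ≠ 0 := Nat.cast_ne_zero.mpr (by omega)
  have hv : ∀ j : ℕ, Complex.exp (Complex.I * ψ) *
      Complex.exp (Complex.I * ((2 * Real.pi * j / N + φ : ℝ) : ℂ))
      = Complex.exp (Complex.I * (ψ + φ)) * Complex.exp (2 * Real.pi * Complex.I / N) ^ j := by
    intro j
    rw [← Complex.exp_nat_mul, ← Complex.exp_add, ← Complex.exp_add]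
    congr 1
    push_cast
    field_simp
    ring
  calc ∑ j ∈ Finset.range N,
      (Complex.exp (Complex.I * ψ) *
        Complex.exp (Complex.I * ((2 * Real.pi * j / N + φ : ℝ) : ℂ))) ^ m
      = ∑ j ∈ Finset.range N, Complex.exp (Complex.I * (ψ + φ)) ^ m *
          (Complex.exp (2 * Real.pi * Complex.I * m / N)) ^ j := by
        apply Finset.sum_congr rfl
        intro j _
        rw [hv j, mul_pow]
        congr 1
        rw [← Complex.exp_nat_mul, ← Complex.exp_nat_mul, ← Complex.exp_nat_mul]
        congr 1
        field_simp
    _ = Complex.exp (Complex.I * (ψ + φ)) ^ m *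
          ∑ j ∈ Finset.range N, (Complex.exp (2 * Real.pi * Complex.I * m / N)) ^ j := by
        rw [Finset.mul_sum]
    _ = 0 := by rw [rootsum N m hm0 hmN, mul_zero]

lemma georem (A v : ℂ) (N : ℕ) (hN : 1 ≤ N) (h : 1 + A * v ≠ 0) :
    v / (1 + A * v) = (∑ k ∈ Finset.range (N-1), (-A)^k * v^(k+1))
      + (-A)^(N-1) * v^N / (1 + A * v) := by
  have hs : ∑ k ∈ Finset.range (N-1), (-A)^k * v^(k+1)
      = v * ∑ k ∈ Finset.range (N-1), (-(A*v))^k := by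
    rw [Finset.mul_sum]
    apply Finset.sum_congr rfl
    intro k _
    rw [neg_pow A, neg_pow (A*v), mul_pow]
    ring
  have hg := geom_sum_mul (-(A*v)) (N-1)
  have hv : v ^ N = v * v ^ (N-1) := by
    rw [← pow_succ']
    congr 1
    omega
  have hmul : v = (∑ k ∈ Finset.range (N-1), (-A)^k * v^(k+1)) * (1 + A * v)
      + (-A)^(N-1) * v^N := by
    rw [neg_pow (A*v), mul_pow] at hg
    rw [hs, hv, neg_pow A]
    linear_combination v * hg
  rw [div_eq_iff h, add_mul, div_mul_cancel₀ _ h]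
  linear_combination hmul

lemma main_bound (r : ℝ) (hr0 : 0 ≤ r) (hr : r < 1) :
    ∀ N : ℕ, 2 ≤ N → ∀ α : ℂ, ‖α‖ ≤ r → ∀ ψ φ : ℝ,
      ‖orderParam N α ψ (fun j => 2 * Real.pi * j / N + φ) - α‖
        ≤ (2 + r) * r ^ (N - 1) / (1 - r) := by
  intro N hN2 α hα ψ φ
  have hNc : (N : ℂ) ≠ 0 := Nat.cast_ne_zero.mpr (by omega)
  have h1r : (0:ℝ) < 1 - r := by linarith
  set A : ℂ := (starRingEnd ℂ) α with hA
  have hAabs : ‖A‖ ≤ r := by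
    rw [hA, Complex.norm_conj]; exact hα
  set v : ℕ → ℂ := fun j =>
    Complex.exp (Complex.I * ψ) *
      Complex.exp (Complex.I * ((2 * Real.pi * j / N + φ : ℝ) : ℂ)) with hvdef
  have hvabs : ∀ j, ‖v j‖ = 1 := by
    intro j
    simp [hvdef, Complex.norm_exp]
  have hAv : ∀ j, ‖A * v j‖ ≤ r := by
    intro j
    rw [norm_mul, hvabs j, mul_one]; exact hAabs
  have hdlow : ∀ j, 1 - r ≤ ‖1 + A * v j‖ := by
    intro j
    have h1 : ‖(1 + A * v j) + (-(A * v j))‖ ≤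
        ‖1 + A * v j‖ + ‖-(A * v j)‖ := norm_add_le _ _
    simp only [add_neg_cancel_right, norm_one, norm_neg] at h1
    have := hAv j
    linarith
  have hden : ∀ j, 1 + A * v j ≠ 0 := by
    intro j hz
    have := hdlow j
    rw [hz, norm_zero] at this
    linarith
  -- rewrite mobius - α
  have hmob : ∀ j : ℕ, mobius α ψ (Complex.exp (Complex.I * ((2 * Real.pi * j / N + φ : ℝ) : ℂ))) - α
      = (1 - A * α) * (v j / (1 + A * v j)) := by
    intro j
    have e1 : mobius α ψ (Complex.exp (Complex.I * ((2 * Real.pi * j / N + φ : ℝ) : ℂ)))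
        = (α + v j) / (1 + A * v j) := by
      rw [mobius]
      simp only [hvdef, hA]
      ring_nf
    rw [e1, div_sub' (hden j), mul_div_assoc]
    congr 1
    ring
  -- order parameter difference
  have hdiff : orderParam N α ψ (fun j => 2 * Real.pi * j / N + φ) - α
      = ((1:ℂ)/N) * ∑ j ∈ Finset.range N,
        (mobius α ψ (Complex.exp (Complex.I * ((2 * Real.pi * j / N + φ : ℝ) : ℂ))) - α) := by
    rw [orderParam, Finset.sum_sub_distrib, Finset.sum_const, Finset.card_range,
      nsmul_eq_mul, mul_sub]
    congr 1
    field_simp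
  -- main sum identity
  have hsum : ∑ j ∈ Finset.range N,
      (mobius α ψ (Complex.exp (Complex.I * ((2 * Real.pi * j / N + φ : ℝ) : ℂ))) - α)
      = (1 - A * α) * ∑ j ∈ Finset.range N, (-A)^(N-1) * (v j)^N / (1 + A * v j) := by
    calc ∑ j ∈ Finset.range N,
        (mobius α ψ (Complex.exp (Complex.I * ((2 * Real.pi * j / N + φ : ℝ) : ℂ))) - α)
        = ∑ j ∈ Finset.range N, (1 - A * α) *
            ((∑ k ∈ Finset.range (N-1), (-A)^k * (v j)^(k+1))
              + (-A)^(N-1) * (v j)^N / (1 + A * v j)) := by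
          apply Finset.sum_congr rfl
          intro j _
          rw [hmob j, georem A (v j) N (by omega) (hden j)]
      _ = (1 - A * α) * ((∑ j ∈ Finset.range N, ∑ k ∈ Finset.range (N-1), (-A)^k * (v j)^(k+1))
            + ∑ j ∈ Finset.range N, (-A)^(N-1) * (v j)^N / (1 + A * v j)) := by
          rw [← Finset.mul_sum, Finset.sum_add_distrib]
      _ = (1 - A * α) * ∑ j ∈ Finset.range N, (-A)^(N-1) * (v j)^N / (1 + A * v j) := by
          have hz : ∑ j ∈ Finset.range N, ∑ k ∈ Finset.range (N-1), (-A)^k * (v j)^(k+1) = 0 := by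
            rw [Finset.sum_comm]
            apply Finset.sum_eq_zero
            intro k hk
            rw [Finset.mem_range] at hk
            have : ∑ j ∈ Finset.range N, (-A)^k * (v j)^(k+1)
                = (-A)^k * ∑ j ∈ Finset.range N, (v j)^(k+1) := by rw [Finset.mul_sum]
            rw [this, vsum N (k+1) (by omega) (by omega) ψ φ, mul_zero]
          rw [hz, zero_add]
  -- bound each term
  have hterm : ∀ j ∈ Finset.range N,
      ‖(-A)^(N-1) * (v j)^N / (1 + A * v j)‖ ≤ r^(N-1) / (1 - r) := by
    intro j _
    rw [norm_div, norm_mul, norm_pow, norm_pow, norm_neg, hvabs j, one_pow, mul_one]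
    apply div_le_div₀ (by positivity) (pow_le_pow_left₀ (norm_nonneg A) hAabs _) h1r (hdlow j)
  have hsumabs : ‖∑ j ∈ Finset.range N, (-A)^(N-1) * (v j)^N / (1 + A * v j)‖
      ≤ N * (r^(N-1) / (1 - r)) := by
    calc ‖∑ j ∈ Finset.range N, (-A)^(N-1) * (v j)^N / (1 + A * v j)‖
        ≤ ∑ j ∈ Finset.range N, ‖(-A)^(N-1) * (v j)^N / (1 + A * v j)‖ :=
          norm_sum_le _ _
      _ ≤ ∑ j ∈ Finset.range N, (r^(N-1) / (1 - r)) := Finset.sum_le_sum hterm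
      _ = N * (r^(N-1) / (1 - r)) := by rw [Finset.sum_const, Finset.card_range, nsmul_eq_mul]
  have hfac : ‖1 - A * α‖ ≤ 2 + r := by
    have h1 : ‖1 - A * α‖ ≤ ‖(1:ℂ)‖ + ‖A * α‖ := by
      calc ‖1 - A * α‖ = ‖1 + (-(A * α))‖ := by ring_nf
        _ ≤ ‖(1:ℂ)‖ + ‖-(A * α)‖ := norm_add_le _ _
        _ = ‖(1:ℂ)‖ + ‖A * α‖ := by rw [norm_neg]
    have h2 : ‖A * α‖ ≤ r * r := by
      rw [norm_mul]
      exact mul_le_mul hAabs hα (norm_nonneg _) hr0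
    simp only [norm_one] at h1
    nlinarith
  -- combine
  rw [hdiff, hsum, norm_mul, norm_mul]
  have hNabs : ‖(1:ℂ)/N‖ = 1 / N := by
    rw [norm_div, norm_one, Complex.norm_natCast]
  rw [hNabs]
  have hNpos : (0:ℝ) < N := by exact_mod_cast Nat.pos_of_ne_zero (by omega)
  calc (1 / (N:ℝ)) * (‖1 - A * α‖ *
        ‖∑ j ∈ Finset.range N, (-A)^(N-1) * (v j)^N / (1 + A * v j)‖)
      ≤ (1 / (N:ℝ)) * ((2 + r) * (N * (r^(N-1) / (1 - r)))) := by
        apply mul_le_mul_of_nonneg_left _ (by positivity)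
        apply mul_le_mul hfac hsumabs (norm_nonneg _) (by linarith)
    _ = (2 + r) * r ^ (N - 1) / (1 - r) := by field_simp

theorem orderParam_close_to_alpha (r : ℝ) (hr0 : 0 ≤ r) (hr : r < 1) :
    (∀ N : ℕ, 2 ≤ N → ∀ α : ℂ, ‖α‖ ≤ r → ∀ ψ φ : ℝ,
      ‖orderParam N α ψ (fun j => 2 * Real.pi * j / N + φ) - α‖
        ≤ (2 + r) * r ^ (N - 1) / (1 - r))
    ∧ (∀ ε : ℝ, 0 < ε → ∃ N₀ : ℕ, ∀ N : ℕ, N₀ ≤ N → ∀ α : ℂ, ‖α‖ ≤ r → ∀ ψ φ : ℝ,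
      ‖orderParam N α ψ (fun j => 2 * Real.pi * j / N + φ) - α‖ ≤ ε) := by
  refine ⟨main_bound r hr0 hr, ?_⟩
  intro ε hε
  have h1r : (0:ℝ) < 1 - r := by linarith
  have ht : Filter.Tendsto (fun n : ℕ => (2 + r) * r ^ n / (1 - r)) Filter.atTop (nhds 0) := by
    have h0 := tendsto_pow_atTop_nhds_zero_of_lt_one hr0 hr
    have h1 : Filter.Tendsto (fun n : ℕ => (2 + r) * r ^ n / (1 - r)) Filter.atTop
        (nhds ((2 + r) * 0 / (1 - r))) := (h0.const_mul _).div_const _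
    simpa using h1
  have hev : ∀ᶠ n in Filter.atTop, (2 + r) * r ^ n / (1 - r) < ε :=
    Filter.Tendsto.eventually_lt_const hε ht
  obtain ⟨M, hM⟩ := Filter.eventually_atTop.mp hev
  refine ⟨max (M + 1) 2, ?_⟩
  intro N hN α hα ψ φ
  have hN2 : 2 ≤ N := le_trans (le_max_right _ _) hN
  have hM1 : M ≤ N - 1 := by
    have := le_trans (le_max_left _ _) hN
    omega
  calc ‖orderParam N α ψ (fun j => 2 * Real.pi * j / N + φ) - α‖
      ≤ (2 + r) * r ^ (N - 1) / (1 - r) := main_bound r hr0 hr N hN2 α hα ψ φ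
    _ ≤ ε := le_of_lt (hM (N - 1) hM1)
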